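/- arXiv:2009.11708 — 2 statements merged into one kernel-verified Lean document; each statement's English description precedes it below -/
import Mathlib

section
/- Let x, y : [a,b] → ℝ be C¹ functions with x(t)² + y(t)² > 0 for all t ∈ [a,b], and let θ_a ∈ ℝ satisfy (cos θ_a, sin θ_a) = (x(a), y(a))/√(x(a)² + y(a)²). Define θ(t) = θ_a + ∫_a^t (−y(u) x'(u) + x(u) y'(u))/(x(u)² + y(u)²) du. Then for every t ∈ [a,b], √(x(t)² + y(t)²)·(cos θ(t), sin θ(t)) = (x(t), y(t)); i.e. θ is a continuous angle function for the planar curve (x, y). -/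
open Set Topology intervalIntegral

private lemma aux_p (x y x' y' r c s φv : ℝ) (h2 : r ^ 2 = x ^ 2 + y ^ 2) (hrne : r ≠ 0)
    (hne : x ^ 2 + y ^ 2 ≠ 0) (hφv : φv = (-y * x' + x * y') / (x ^ 2 + y ^ 2)) :
    (0 : ℝ) = ((x' * c + x * (-s * φv) + (y' * s + y * (c * φv))) * r
      - (x * c + y * s) * ((x * x' + y * y') / r)) / r ^ 2 := by
  subst hφv
  field_simp
  linear_combination (-(x' * c * (x ^ 2 + y ^ 2) + -(x * (s * (-(y * x') + x * y'))) +
            (y' * s * (x ^ 2 + y ^ 2) + y * (c * (-(y * x') + x * y'))))) * h2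

private lemma aux_q (x y x' y' r c s φv : ℝ) (h2 : r ^ 2 = x ^ 2 + y ^ 2) (hrne : r ≠ 0)
    (hne : x ^ 2 + y ^ 2 ≠ 0) (hφv : φv = (-y * x' + x * y') / (x ^ 2 + y ^ 2)) :
    (0 : ℝ) = ((x' * s + x * (c * φv) - (y' * c + y * (-s * φv))) * r
      - (x * s - y * c) * ((x * x' + y * y') / r)) / r ^ 2 := by
  subst hφv
  field_simp
  linear_combination (-(x' * s * (x ^ 2 + y ^ 2) + x * (c * (-(y * x') + x * y')) -
            (y' * c * (x ^ 2 + y ^ 2) + -(y * (s * (-(y * x') + x * y')))))) * h2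

/-- The integral formula `θ(t) = θ_a + ∫_a^t (−y x' + x y')/(x²+y²)`
defines a continuous angle function for the planar curve `(x, y)` avoiding the origin. -/
theorem stmt_0 (a b : ℝ) (hab : a ≤ b) (x y x' y' : ℝ → ℝ)
    (hx : ∀ t ∈ Set.Icc a b, HasDerivAt x (x' t) t)
    (hy : ∀ t ∈ Set.Icc a b, HasDerivAt y (y' t) t)
    (hx' : ContinuousOn x' (Set.Icc a b))
    (hy' : ContinuousOn y' (Set.Icc a b))
    (hpos : ∀ t ∈ Set.Icc a b, 0 < x t ^ 2 + y t ^ 2)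
    (θa : ℝ)
    (hcos : Real.cos θa = x a / Real.sqrt (x a ^ 2 + y a ^ 2))
    (hsin : Real.sin θa = y a / Real.sqrt (x a ^ 2 + y a ^ 2))
    (θ : ℝ → ℝ)
    (hθ : ∀ t, θ t = θa + ∫ u in a..t,
      (-(y u) * x' u + x u * y' u) / (x u ^ 2 + y u ^ 2)) :
    ∀ t ∈ Set.Icc a b,
      Real.sqrt (x t ^ 2 + y t ^ 2) * Real.cos (θ t) = x t ∧
      Real.sqrt (x t ^ 2 + y t ^ 2) * Real.sin (θ t) = y t := by
  have hab' : a ∈ Icc a b := ⟨le_rfl, hab⟩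
  set φ : ℝ → ℝ := fun u => (-(y u) * x' u + x u * y' u) / (x u ^ 2 + y u ^ 2) with hφ
  set r : ℝ → ℝ := fun t => Real.sqrt (x t ^ 2 + y t ^ 2) with hr
  have hne : ∀ t ∈ Icc a b, x t ^ 2 + y t ^ 2 ≠ 0 := fun t ht => (hpos t ht).ne'
  have hrpos : ∀ t ∈ Icc a b, 0 < r t := fun t ht => Real.sqrt_pos.2 (hpos t ht)
  have hrsq : ∀ t ∈ Icc a b, r t ^ 2 = x t ^ 2 + y t ^ 2 := fun t ht =>
    Real.sq_sqrt (hpos t ht).le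
  -- continuity
  have hxc : ContinuousOn x (Icc a b) := fun t ht => (hx t ht).continuousAt.continuousWithinAt
  have hyc : ContinuousOn y (Icc a b) := fun t ht => (hy t ht).continuousAt.continuousWithinAt
  have hφc : ContinuousOn φ (Icc a b) := by
    apply ContinuousOn.div
    · exact (hyc.neg.mul hx').add (hxc.mul hy')
    · exact (hxc.pow 2).add (hyc.pow 2)
    · exact hne
  -- derivative of θ within Icc a b
  have hθd : ∀ t ∈ Icc a b, HasDerivWithinAt θ (φ t) (Icc a b) t := by
    intro t ht
    haveI : Fact (t ∈ Icc a b) := ⟨ht⟩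
    have hint : IntervalIntegrable φ MeasureTheory.volume a t := by
      apply (hφc.mono _).intervalIntegrable
      rw [uIcc_of_le ht.1]
      exact Icc_subset_Icc le_rfl ht.2
    have hmeas : StronglyMeasurableAtFilter φ (𝓝[Icc a b] t) :=
      ⟨Icc a b, self_mem_nhdsWithin, hφc.aestronglyMeasurable measurableSet_Icc⟩
    have h := intervalIntegral.integral_hasDerivWithinAt_right (s := Icc a b) (t := Icc a b) hint hmeas (hφc t ht)
    have h2 : HasDerivWithinAt (fun u => θa + ∫ s in a..u, φ s) (φ t) (Icc a b) t :=
      h.const_add θa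
    exact h2.congr (fun u _ => hθ u) (hθ t)
  -- derivative of r
  have hrd : ∀ t ∈ Icc a b, HasDerivAt r ((x t * x' t + y t * y' t) / r t) t := by
    intro t ht
    have h1 : HasDerivAt (fun s => x s ^ 2 + y s ^ 2)
        (2 * x t * x' t + 2 * y t * y' t) t := by
      have := ((hx t ht).pow 2).add ((hy t ht).pow 2)
      exact this.congr_deriv (by norm_num)
    have h2 := (Real.hasDerivAt_sqrt (hne t ht)).comp t h1
    refine h2.congr_deriv ?_
    have h3 : Real.sqrt (x t ^ 2 + y t ^ 2) ≠ 0 := (hrpos t ht).ne'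
    rw [hr]
    field_simp
  -- the two auxiliary functions
  set p : ℝ → ℝ := fun t => (x t * Real.cos (θ t) + y t * Real.sin (θ t)) / r t with hp
  set q : ℝ → ℝ := fun t => (x t * Real.sin (θ t) - y t * Real.cos (θ t)) / r t with hq
  have hpd : ∀ t ∈ Icc a b, HasDerivWithinAt p 0 (Icc a b) t := by
    intro t ht
    have hc : HasDerivWithinAt (fun s => Real.cos (θ s)) (-Real.sin (θ t) * φ t) (Icc a b) t :=
      (Real.hasDerivAt_cos (θ t)).comp_hasDerivWithinAt t (hθd t ht)
    have hs : HasDerivWithinAt (fun s => Real.sin (θ s)) (Real.cos (θ t) * φ t) (Icc a b) t :=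
      (Real.hasDerivAt_sin (θ t)).comp_hasDerivWithinAt t (hθd t ht)
    have hN : HasDerivWithinAt (fun s => x s * Real.cos (θ s) + y s * Real.sin (θ s))
        (x' t * Real.cos (θ t) + x t * (-Real.sin (θ t) * φ t)
          + (y' t * Real.sin (θ t) + y t * (Real.cos (θ t) * φ t))) (Icc a b) t :=
      (((hx t ht).hasDerivWithinAt.mul hc)).add ((hy t ht).hasDerivWithinAt.mul hs)
    have hD := hN.div ((hrd t ht).hasDerivWithinAt) (hrpos t ht).ne'
    refine hD.congr_deriv (Eq.symm ?_)
    exact aux_p (x t) (y t) (x' t) (y' t) (r t) (Real.cos (θ t)) (Real.sin (θ t)) (φ t)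
      (hrsq t ht) (hrpos t ht).ne' (hne t ht) (by simp only [hφ])
  have hqd : ∀ t ∈ Icc a b, HasDerivWithinAt q 0 (Icc a b) t := by
    intro t ht
    have hc : HasDerivWithinAt (fun s => Real.cos (θ s)) (-Real.sin (θ t) * φ t) (Icc a b) t :=
      (Real.hasDerivAt_cos (θ t)).comp_hasDerivWithinAt t (hθd t ht)
    have hs : HasDerivWithinAt (fun s => Real.sin (θ s)) (Real.cos (θ t) * φ t) (Icc a b) t :=
      (Real.hasDerivAt_sin (θ t)).comp_hasDerivWithinAt t (hθd t ht)
    have hN : HasDerivWithinAt (fun s => x s * Real.sin (θ s) - y s * Real.cos (θ s))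
        (x' t * Real.sin (θ t) + x t * (Real.cos (θ t) * φ t)
          - (y' t * Real.cos (θ t) + y t * (-Real.sin (θ t) * φ t))) (Icc a b) t :=
      (((hx t ht).hasDerivWithinAt.mul hs)).sub ((hy t ht).hasDerivWithinAt.mul hc)
    have hD := hN.div ((hrd t ht).hasDerivWithinAt) (hrpos t ht).ne'
    refine hD.congr_deriv (Eq.symm ?_)
    exact aux_q (x t) (y t) (x' t) (y' t) (r t) (Real.cos (θ t)) (Real.sin (θ t)) (φ t)
      (hrsq t ht) (hrpos t ht).ne' (hne t ht) (by simp only [hφ])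
  -- p and q are constant
  have hrc : ContinuousOn r (Icc a b) := fun t ht => ((hrd t ht).continuousAt).continuousWithinAt
  have hθc : ContinuousOn θ (Icc a b) := fun t ht => (hθd t ht).continuousWithinAt
  have hpc : ContinuousOn p (Icc a b) :=
    ((hxc.mul (Real.continuous_cos.comp_continuousOn hθc)).add
      (hyc.mul (Real.continuous_sin.comp_continuousOn hθc))).div hrc
      (fun t ht => (hrpos t ht).ne')
  have hqc : ContinuousOn q (Icc a b) :=
    ((hxc.mul (Real.continuous_sin.comp_continuousOn hθc)).sub
      (hyc.mul (Real.continuous_cos.comp_continuousOn hθc))).div hrc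
      (fun t ht => (hrpos t ht).ne')
  have key : ∀ (f : ℝ → ℝ), ContinuousOn f (Icc a b) →
      (∀ t ∈ Icc a b, HasDerivWithinAt f 0 (Icc a b) t) →
      ∀ t ∈ Icc a b, f t = f a := by
    intro f hfc hfd
    apply constant_of_has_deriv_right_zero hfc
    intro t ht
    exact (hfd t (Ico_subset_Icc_self ht)).mono_of_mem_nhdsWithin (Icc_mem_nhdsGE_of_mem ht)
  have hθa : θ a = θa := by
    rw [hθ a, intervalIntegral.integral_same, add_zero]
  have hpa : p a = 1 := by
    rw [hp]
    simp only [hθa, hcos, hsin, hr]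
    have h2 : Real.sqrt (x a ^ 2 + y a ^ 2) ^ 2 = x a ^ 2 + y a ^ 2 :=
      Real.sq_sqrt (hpos a hab').le
    have h : Real.sqrt (x a ^ 2 + y a ^ 2) ≠ 0 := (Real.sqrt_pos.2 (hpos a hab')).ne'
    field_simp
    exact h2.symm
  have hqa : q a = 0 := by
    rw [hq]
    simp only [hθa, hcos, hsin, hr]
    have h : Real.sqrt (x a ^ 2 + y a ^ 2) ≠ 0 := (Real.sqrt_pos.2 (hpos a hab')).ne'
    field_simp
    ring
  intro t ht
  have hpt : p t = 1 := (key p hpc hpd t ht).trans hpa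
  have hqt : q t = 0 := (key q hqc hqd t ht).trans hqa
  have hrt := hrpos t ht
  rw [hp] at hpt; rw [hq] at hqt
  simp only at hpt hqt
  rw [div_eq_one_iff_eq hrt.ne'] at hpt
  rw [div_eq_zero_iff] at hqt
  have hqt' : x t * Real.sin (θ t) - y t * Real.cos (θ t) = 0 := hqt.resolve_right hrt.ne'
  have hpy := Real.sin_sq_add_cos_sq (θ t)
  constructor
  · linear_combination (-(Real.cos (θ t))) * hpt + (-(Real.sin (θ t))) * hqt' + x t * hpy
  · linear_combination (-(Real.sin (θ t))) * hpt + Real.cos (θ t) * hqt' + y t * hpy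
end

section
/- Let B : ℝ³ → ℝ³ be a C² vector field that is nowhere zero, F̂ : ℝ³ → ℝ³ a C¹ field of unit vectors with F̂ · B = 0 everywhere, and set B_f⊥ = B × F̂. Suppose λ, α : ℝ³ → ℝ are C¹ functions with ∇×B = λ B_f⊥ + α B. Define ω_b = ((∇×B_f⊥)·B)/‖B‖², ω_f = (∇×B_f⊥)·F̂, and ω_fl = ((∇×B_f⊥)·B_f⊥)/‖B‖². Then ∇×(∇×B) = C_∥ + C_⊥, where C_∥ = (∇λ·F̂ + α² + λω_b) B and C_⊥ = −(∇λ·B) F̂ + αλ B_f⊥ + ∇α × B + λω_f F̂ + λω_fl B_f⊥; moreover C_∥ is parallel to B and C_⊥ · B = 0 pointwise. -/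
open RealInnerProductSpace

/-- The cross product on Euclidean ℝ³. -/
noncomputable def cross3 (u v : EuclideanSpace ℝ (Fin 3)) : EuclideanSpace ℝ (Fin 3) :=
  (EuclideanSpace.equiv (Fin 3) ℝ).symm
    ![u 1 * v 2 - u 2 * v 1, u 2 * v 0 - u 0 * v 2, u 0 * v 1 - u 1 * v 0]

/-- The curl `∇×V = (∂₂V₃ − ∂₃V₂, ∂₃V₁ − ∂₁V₃, ∂₁V₂ − ∂₂V₁)` of a vector field on ℝ³. -/
noncomputable def curl3 (V : EuclideanSpace ℝ (Fin 3) → EuclideanSpace ℝ (Fin 3))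
    (x : EuclideanSpace ℝ (Fin 3)) : EuclideanSpace ℝ (Fin 3) :=
  (EuclideanSpace.equiv (Fin 3) ℝ).symm
    ![fderiv ℝ V x (EuclideanSpace.single 1 1) 2 - fderiv ℝ V x (EuclideanSpace.single 2 1) 1,
      fderiv ℝ V x (EuclideanSpace.single 2 1) 0 - fderiv ℝ V x (EuclideanSpace.single 0 1) 2,
      fderiv ℝ V x (EuclideanSpace.single 0 1) 1 - fderiv ℝ V x (EuclideanSpace.single 1 1) 0]

namespace Stmt6Aux

local notation "E3" => EuclideanSpace ℝ (Fin 3)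

lemma inner3 (u v : E3) : ⟪u, v⟫ = u 0 * v 0 + u 1 * v 1 + u 2 * v 2 := by
  simp [PiLp.inner_apply, Fin.sum_univ_three]; ring

lemma cross3_0 (u v : E3) : cross3 u v 0 = u 1 * v 2 - u 2 * v 1 := rfl
lemma cross3_1 (u v : E3) : cross3 u v 1 = u 2 * v 0 - u 0 * v 2 := rfl
lemma cross3_2 (u v : E3) : cross3 u v 2 = u 0 * v 1 - u 1 * v 0 := rfl

lemma curl3_0 (V : E3 → E3) (x : E3) : curl3 V x 0 =
    fderiv ℝ V x (EuclideanSpace.single 1 1) 2 - fderiv ℝ V x (EuclideanSpace.single 2 1) 1 := rfl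
lemma curl3_1 (V : E3 → E3) (x : E3) : curl3 V x 1 =
    fderiv ℝ V x (EuclideanSpace.single 2 1) 0 - fderiv ℝ V x (EuclideanSpace.single 0 1) 2 := rfl
lemma curl3_2 (V : E3 → E3) (x : E3) : curl3 V x 2 =
    fderiv ℝ V x (EuclideanSpace.single 0 1) 1 - fderiv ℝ V x (EuclideanSpace.single 1 1) 0 := rfl

lemma grad_apply (g : E3 → ℝ) (x : E3) (i : Fin 3) :
    gradient g x i = fderiv ℝ g x (EuclideanSpace.single i 1) := by
  have h : (gradient g x) i = ⟪EuclideanSpace.single i (1:ℝ), gradient g x⟫ := by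
    rw [EuclideanSpace.inner_single_left]; simp
  rw [h, real_inner_comm, gradient, InnerProductSpace.toDual_symm_apply]

lemma triple1 (u v w : E3) :
    cross3 u (cross3 v w) = ⟪u, w⟫ • v - ⟪u, v⟫ • w := by
  ext i
  fin_cases i <;>
    simp only [cross3_0, cross3_1, cross3_2, PiLp.sub_apply, PiLp.smul_apply, smul_eq_mul,
      inner3, Fin.zero_eta, Fin.mk_one, Fin.reduceFinMk] <;> ring

lemma triple2 (u v w : E3) :
    cross3 (cross3 u v) w = ⟪u, w⟫ • v - ⟪v, w⟫ • u := by
  ext i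
  fin_cases i <;>
    simp only [cross3_0, cross3_1, cross3_2, PiLp.sub_apply, PiLp.smul_apply, smul_eq_mul,
      inner3, Fin.zero_eta, Fin.mk_one, Fin.reduceFinMk] <;> ring

lemma inner_cross_left (u v : E3) : ⟪cross3 u v, u⟫ = 0 := by
  simp only [inner3, cross3_0, cross3_1, cross3_2]; ring

lemma inner_cross_right (u v : E3) : ⟪cross3 u v, v⟫ = 0 := by
  simp only [inner3, cross3_0, cross3_1, cross3_2]; ring

lemma lagrange (u v : E3) :
    ⟪cross3 u v, cross3 u v⟫ = ⟪u, u⟫ * ⟪v, v⟫ - ⟪u, v⟫ ^ 2 := by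
  simp only [inner3, cross3_0, cross3_1, cross3_2]; ring

lemma cross3_right_lin (u v w : E3) (a b : ℝ) :
    cross3 u (a • v - b • w) = a • cross3 u v - b • cross3 u w := by
  ext i
  fin_cases i <;>
    simp only [cross3_0, cross3_1, cross3_2, PiLp.sub_apply, PiLp.smul_apply, smul_eq_mul, Fin.zero_eta, Fin.mk_one, Fin.reduceFinMk] <;> ring

/-- Orthogonal-frame decomposition in ℝ³. -/
lemma span3 (b f c : E3) (hb : b ≠ 0) (hf : ⟪f, f⟫ = (1:ℝ)) (hp : ⟪b, f⟫ = 0) :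
    c = (⟪c, b⟫ / ‖b‖ ^ 2) • b + ⟪c, f⟫ • f +
      (⟪c, cross3 b f⟫ / ‖b‖ ^ 2) • cross3 b f := by
  set bf := cross3 b f with hbf
  have hn : ‖b‖ ^ 2 ≠ 0 := pow_ne_zero _ (norm_ne_zero_iff.mpr hb)
  have hnn : ⟪b, b⟫ = ‖b‖ ^ 2 := real_inner_self_eq_norm_sq b
  have h1 : cross3 bf (cross3 bf c) = ⟪bf, c⟫ • bf - ⟪bf, bf⟫ • c := triple1 bf bf c
  have h2 : cross3 bf c = ⟪b, c⟫ • f - ⟪f, c⟫ • b := triple2 b f c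
  have h3 : cross3 bf f = ⟪b, f⟫ • f - ⟪f, f⟫ • b := triple2 b f f
  have h4 : cross3 bf b = ⟪b, b⟫ • f - ⟪f, b⟫ • b := triple2 b f b
  have h5 : ⟪bf, bf⟫ = ‖b‖ ^ 2 := by
    rw [hbf, lagrange, hf, hp, hnn]; ring
  have h6 : cross3 bf (cross3 bf c) = ⟪b, c⟫ • cross3 bf f - ⟪f, c⟫ • cross3 bf b := by
    rw [h2, cross3_right_lin]
  have hfb : ⟪f, b⟫ = (0:ℝ) := by
    have h : ⟪f, b⟫ = ⟪b, f⟫ := real_inner_comm _ _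
    rw [h, hp]
  have hcb : ⟪c, b⟫ = ⟪b, c⟫ := real_inner_comm _ _
  have hcf : ⟪c, f⟫ = ⟪f, c⟫ := real_inner_comm _ _
  have hcbf : ⟪c, bf⟫ = ⟪bf, c⟫ := real_inner_comm _ _
  have key : (‖b‖ ^ 2) • c = ⟪c, b⟫ • b + (‖b‖ ^ 2 * ⟪c, f⟫) • f + ⟪c, bf⟫ • bf := by
    have h7 := h6
    rw [h1, h3, h4, h5, hf, hp, hfb, hnn] at h7
    rw [hcb, hcf, hcbf]
    linear_combination (norm := module) -h7
  calc c = (‖b‖ ^ 2)⁻¹ • ((‖b‖ ^ 2) • c) := (inv_smul_smul₀ hn c).symm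
    _ = _ := by
        rw [key]
        match_scalars <;> field_simp

lemma curl3_comb (g h : E3 → ℝ) (V W : E3 → E3) (x : E3)
    (hg : DifferentiableAt ℝ g x) (hh : DifferentiableAt ℝ h x)
    (hV : DifferentiableAt ℝ V x) (hW : DifferentiableAt ℝ W x) :
    curl3 (fun y => g y • V y + h y • W y) x =
      cross3 (gradient g x) (V x) + g x • curl3 V x +
        (cross3 (gradient h x) (W x) + h x • curl3 W x) := by
  have hd : fderiv ℝ (fun y => g y • V y + h y • W y) x =
      (g x • fderiv ℝ V x + (fderiv ℝ g x).smulRight (V x)) +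
      (h x • fderiv ℝ W x + (fderiv ℝ h x).smulRight (W x)) := by
    rw [fderiv_fun_add (f := fun y => g y • V y) (g := fun y => h y • W y) (hg.smul hV) (hh.smul hW), fderiv_fun_smul hg hV, fderiv_fun_smul hh hW]
  ext i
  fin_cases i <;>
    simp only [curl3_0, curl3_1, curl3_2, hd, grad_apply, cross3_0, cross3_1, cross3_2,
      PiLp.add_apply, PiLp.smul_apply, smul_eq_mul, ContinuousLinearMap.add_apply, ContinuousLinearMap.smul_apply,
      ContinuousLinearMap.coe_smul', Pi.smul_apply, ContinuousLinearMap.smulRight_apply,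
      Fin.zero_eta, Fin.mk_one, Fin.reduceFinMk] <;> ring

end Stmt6Aux

open Stmt6Aux

/-- decomposition of `∇×(∇×B)` into a component `C_∥` parallel to `B`
(changing only field strength) and a component `C_⊥` perpendicular to `B`
(changing only field-line topology), for `∇×B = λ B_f⊥ + α B` with `B_f⊥ = B × F̂`,
`ω_b = ((∇×B_f⊥)·B)/‖B‖²`, `ω_f = (∇×B_f⊥)·F̂`, `ω_fl = ((∇×B_f⊥)·B_f⊥)/‖B‖²`:
`C_∥ = (∇λ·F̂ + α² + λω_b) B` and
`C_⊥ = −(∇λ·B) F̂ + αλ B_f⊥ + ∇α × B + λω_f F̂ + λω_fl B_f⊥`. -/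


theorem stmt_6 (B Fh Bf : EuclideanSpace ℝ (Fin 3) → EuclideanSpace ℝ (Fin 3))
    (lam alp : EuclideanSpace ℝ (Fin 3) → ℝ)
    (hB : ContDiff ℝ 2 B) (hFh : ContDiff ℝ 1 Fh)
    (hBne : ∀ x, B x ≠ 0)
    (hFunit : ∀ x, ‖Fh x‖ = 1)
    (hFperp : ∀ x, ⟪Fh x, B x⟫ = 0)
    (hBf : ∀ x, Bf x = cross3 (B x) (Fh x))
    (hlam : ContDiff ℝ 1 lam) (halp : ContDiff ℝ 1 alp)
    (hcurl : ∀ x, curl3 B x = lam x • Bf x + alp x • B x)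
    (Cpar Cperp : EuclideanSpace ℝ (Fin 3) → EuclideanSpace ℝ (Fin 3))
    (hCpar : ∀ x, Cpar x =
      (⟪gradient lam x, Fh x⟫ + alp x ^ 2 +
        lam x * (⟪curl3 Bf x, B x⟫ / ‖B x‖ ^ 2)) • B x)
    (hCperp : ∀ x, Cperp x =
      (-⟪gradient lam x, B x⟫) • Fh x + (alp x * lam x) • Bf x
        + cross3 (gradient alp x) (B x)
        + (lam x * ⟪curl3 Bf x, Fh x⟫) • Fh x
        + (lam x * (⟪curl3 Bf x, Bf x⟫ / ‖B x‖ ^ 2)) • Bf x) :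
    ∀ x, curl3 (curl3 B) x = Cpar x + Cperp x ∧
      (∃ k : ℝ, Cpar x = k • B x) ∧ ⟪Cperp x, B x⟫ = 0 := by
  intro x
  have hBd : DifferentiableAt ℝ B x := (hB.differentiable (by norm_num)).differentiableAt
  have hFd : DifferentiableAt ℝ Fh x := (hFh.differentiable one_ne_zero).differentiableAt
  have hlamd : DifferentiableAt ℝ lam x := (hlam.differentiable one_ne_zero).differentiableAt
  have halpd : DifferentiableAt ℝ alp x := (halp.differentiable one_ne_zero).differentiableAt
  have hBfd : DifferentiableAt ℝ Bf x := by
    have hfun : Bf = fun y => cross3 (B y) (Fh y) := funext hBf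
    rw [hfun, differentiableAt_euclidean]
    have hBc : ∀ j : Fin 3, DifferentiableAt ℝ (fun y => B y j) x :=
      fun j => differentiableAt_euclidean.mp hBd j
    have hFc : ∀ j : Fin 3, DifferentiableAt ℝ (fun y => Fh y j) x :=
      fun j => differentiableAt_euclidean.mp hFd j
    intro i
    fin_cases i <;>
      simp only [cross3_0, cross3_1, cross3_2, Fin.zero_eta, Fin.mk_one, Fin.reduceFinMk] <;>
      exact ((hBc _).mul (hFc _)).sub ((hBc _).mul (hFc _))
  have hmain := curl3_comb lam alp Bf B x hlamd halpd hBfd hBd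
  have h1 : curl3 (curl3 B) x = curl3 (fun y => lam y • Bf y + alp y • B y) x :=
    congrFun (congrArg curl3 (funext hcurl)) x
  refine ⟨?_, ⟨_, hCpar x⟩, ?_⟩
  · rw [h1, hmain, hCpar x, hCperp x, hcurl x, hBf x]
    have hff : ⟪Fh x, Fh x⟫ = (1:ℝ) := by
      rw [real_inner_self_eq_norm_sq, hFunit x]; norm_num
    have hbf0 : ⟪B x, Fh x⟫ = 0 := by
      have h : ⟪B x, Fh x⟫ = ⟪Fh x, B x⟫ := real_inner_comm _ _
      rw [h, hFperp x]
    have hspan := span3 (B x) (Fh x) (curl3 Bf x) (hBne x) hff hbf0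
    have htrip := triple1 (gradient lam x) (B x) (Fh x)
    linear_combination (norm := module) htrip + (lam x) • hspan
  · rw [hCperp x, hBf x]
    simp only [inner_add_left, real_inner_smul_left, hFperp x, inner_cross_left,
      inner_cross_right, RCLike.conj_to_real, mul_zero, add_zero, zero_add, neg_zero]
end
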